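/- Let L be a real symmetric n×n positive semidefinite matrix whose nonzero eigenvalues all lie in [λ, 2] for some λ ∈ (0,2], with spectral decomposition L = ∑_i λ_i u_i u_iᵀ. Let L† denote its Moore–Penrose pseudoinverse and let A = I - L (so A^k has eigenvalue (1-λ_i)^k on u_i). For ε > 0 and integers T ≥ log(6/(ελ))/λ, N ≥ 6T/ε, K ≥ max(6T, log(6T/ε)), and any vector b in the image of L, one has ‖(L† - (T/N)·∑_{j=1}^{N} ∑_{k=0}^{K-1} P_{jT/N}(k) A^k) b‖ ≤ ε‖b‖/2. -/

import Mathlib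

/-- The Poisson probability mass function with parameter `s`. -/
noncomputable def poissonPMF (s : ℝ) (k : ℕ) : ℝ := Real.exp (-s) * s ^ k / (Nat.factorial k)

/-- `Ld` is the Moore–Penrose pseudoinverse of `L` (the four Penrose conditions). -/
def IsMoorePenrose {n : ℕ} (L Ld : Matrix (Fin n) (Fin n) ℝ) : Prop :=
  L * Ld * L = L ∧ Ld * L * Ld = Ld ∧ Matrix.transpose (L * Ld) = L * Ld ∧ Matrix.transpose (Ld * L) = Ld * L

open Real Finset Matrix in
lemma exp_tail_bound (y : ℝ) (K : ℕ) :
    |Real.exp y - ∑ k ∈ range K, y ^ k / k.factorial| ≤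
      |y| ^ K / K.factorial * Real.exp |y| := by
  have hf : HasSum (fun k : ℕ => y ^ k / k.factorial) (Real.exp y) := by
    rw [Real.exp_eq_exp_ℝ]
    exact NormedSpace.expSeries_div_hasSum_exp y
  have htail : HasSum (fun k : ℕ => y ^ (k + K) / (k + K).factorial)
      (Real.exp y - ∑ k ∈ range K, y ^ k / k.factorial) :=
    (hasSum_nat_add_iff (f := fun k : ℕ => y ^ k / k.factorial) K).2 (by simpa using hf)
  have hb : HasSum (fun k : ℕ => |y| ^ K / K.factorial * (|y| ^ k / k.factorial))
      (|y| ^ K / K.factorial * Real.exp |y|) := by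
    apply HasSum.mul_left
    rw [Real.exp_eq_exp_ℝ]
    exact NormedSpace.expSeries_div_hasSum_exp |y|
  have hle : ∀ k : ℕ, |y ^ (k + K) / (k + K).factorial| ≤
      |y| ^ K / K.factorial * (|y| ^ k / k.factorial) := by
    intro k
    rw [abs_div, abs_pow, Nat.abs_cast]
    rw [div_le_iff₀ (by positivity)]
    have hfac : (k.factorial * K.factorial : ℝ) ≤ (k + K).factorial := by
      exact_mod_cast Nat.le_of_dvd (Nat.factorial_pos _)
        (Nat.factorial_mul_factorial_dvd_factorial_add k K)
    have h0 : (k.factorial : ℝ) ≠ 0 := by positivity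
    have h0' : (K.factorial : ℝ) ≠ 0 := by positivity
    calc |y| ^ (k + K) = |y| ^ K * |y| ^ k := by rw [pow_add]; ring
      _ = (|y| ^ K / K.factorial * (|y| ^ k / k.factorial)) * (k.factorial * K.factorial) := by
          field_simp
      _ ≤ _ := by
          apply mul_le_mul_of_nonneg_left hfac (by positivity)
  have h1 := hasSum_le (fun k => (abs_le.1 (hle k)).2) htail hb
  have h2 := hasSum_le (g := fun k : ℕ => |y| ^ K / K.factorial * (|y| ^ k / k.factorial))
    (fun k => by have := (abs_le.1 (hle k)).1; linarith) htail.neg hb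
  rw [abs_le]
  constructor <;> linarith

open Real Finset Matrix

lemma poisson_partial_bound (s μ : ℝ) (hs : 0 ≤ s) (hμ1 : 0 ≤ μ) (hμ2 : μ ≤ 2) (K : ℕ) :
    |∑ k ∈ range K, poissonPMF s k * (1 - μ) ^ k - Real.exp (-(s * μ))| ≤
      s ^ K / K.factorial := by
  have hsum : ∑ k ∈ range K, poissonPMF s k * (1 - μ) ^ k
      = Real.exp (-s) * ∑ k ∈ range K, (s * (1 - μ)) ^ k / k.factorial := by
    rw [mul_sum]
    refine Finset.sum_congr rfl fun k _ => ?_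
    rw [poissonPMF, mul_pow]
    ring
  have hexp : Real.exp (-(s * μ)) = Real.exp (-s) * Real.exp (s * (1 - μ)) := by
    rw [← Real.exp_add]; ring_nf
  rw [hsum, hexp, ← mul_sub, abs_mul, Real.abs_exp]
  have habs : |s * (1 - μ)| ≤ s := by
    rw [abs_mul, abs_of_nonneg hs]
    have : |1 - μ| ≤ 1 := by rw [abs_le]; constructor <;> linarith
    nlinarith
  have h1 : |∑ k ∈ range K, (s * (1 - μ)) ^ k / k.factorial - Real.exp (s * (1 - μ))|
      ≤ |s * (1 - μ)| ^ K / K.factorial * Real.exp |s * (1 - μ)| := by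
    rw [abs_sub_comm]; exact exp_tail_bound _ _
  have h2 : |s * (1 - μ)| ^ K / K.factorial * Real.exp |s * (1 - μ)|
      ≤ s ^ K / K.factorial * Real.exp s := by
    apply mul_le_mul
    · apply div_le_div_of_nonneg_right ?_ ?_ |>.trans_eq rfl
      all_goals first
      | exact pow_le_pow_left₀ (abs_nonneg _) habs K
      | positivity
    · exact Real.exp_le_exp.2 habs
    · positivity
    · positivity
  calc Real.exp (-s) * |∑ k ∈ range K, (s * (1 - μ)) ^ k / k.factorial - Real.exp (s * (1 - μ))|
      ≤ Real.exp (-s) * (s ^ K / K.factorial * Real.exp s) := by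
        apply mul_le_mul_of_nonneg_left (h1.trans h2) (Real.exp_nonneg _)
    _ = s ^ K / K.factorial := by
        rw [Real.exp_neg]; field_simp

lemma geom_part (T μ : ℝ) (N : ℕ) (hN : 0 < N) (hT : 0 < T) (hμ : 0 < μ) :
    0 ≤ μ⁻¹ - (T / N) * ∑ j ∈ Icc 1 N, Real.exp (-(j * T / N * μ)) ∧
    μ⁻¹ - (T / N) * ∑ j ∈ Icc 1 N, Real.exp (-(j * T / N * μ)) ≤
      Real.exp (-(T * μ)) / μ + T / N := by
  set h : ℝ := T / N with hh
  have hNR : (0:ℝ) < N := by exact_mod_cast hN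
  have hh0 : 0 < h := div_pos hT hNR
  set u : ℝ := h * μ with hu
  have hu0 : 0 < u := mul_pos hh0 hμ
  set r : ℝ := Real.exp (-u) with hr
  have hr0 : 0 < r := Real.exp_pos _
  have hr1 : r < 1 := by
    rw [hr, Real.exp_lt_one_iff]; linarith
  -- rewrite each exponential as a power of r
  have hterm : ∀ j : ℕ, Real.exp (-(j * T / N * μ)) = r ^ j := by
    intro j
    rw [hr, ← Real.exp_nat_mul]
    congr 1
    rw [hu, hh]
    field_simp
  have hIcc : ∑ j ∈ Icc 1 N, Real.exp (-(j * T / N * μ)) = ∑ i ∈ range N, r ^ (i + 1) := by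
    rw [show Icc 1 N = Ico 1 (N+1) by rfl]
    rw [Finset.sum_Ico_eq_sum_range]
    simp only [Nat.add_sub_cancel]
    refine Finset.sum_congr rfl fun i _ => ?_
    rw [hterm (1 + i), add_comm 1 i]
  -- key scalar inequalities
  have key1 : u * r ≤ 1 - r := by
    have h1 := Real.add_one_le_exp u
    have h4 : Real.exp (-u) * Real.exp u = 1 := by rw [← Real.exp_add]; simp
    rw [hr]
    nlinarith [Real.exp_pos u, Real.exp_pos (-u)]
  have key2 : 1 - r ≤ u := by
    have := Real.add_one_le_exp (-u)
    rw [← hr] at this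
    linarith
  -- telescoping facts
  have htel : ∑ i ∈ range N, (r ^ i - r ^ (i + 1)) = 1 - r ^ N := by
    have := Finset.sum_range_sub' (f := fun i => r ^ i) N
    simpa using this
  have hrN0 : 0 ≤ r ^ N := le_of_lt (pow_pos hr0 N)
  have hrN1 : r ^ N ≤ 1 := pow_le_one₀ (le_of_lt hr0) (le_of_lt hr1)
  -- upper bound for the sum : h * S ≤ (1 - r^N)/μ
  have hub : h * ∑ i ∈ range N, r ^ (i + 1) ≤ (1 - r ^ N) / μ := by
    rw [mul_sum, ← htel, Finset.sum_div]
    apply Finset.sum_le_sum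
    intro i _
    have hpi : (0:ℝ) ≤ r ^ i := le_of_lt (pow_pos hr0 i)
    rw [le_div_iff₀ hμ]
    have : h * r ^ (i + 1) * μ = (u * r) * r ^ i := by rw [hu, pow_succ]; ring
    rw [this]
    have : r ^ i - r ^ (i + 1) = (1 - r) * r ^ i := by rw [pow_succ]; ring
    rw [this]
    exact mul_le_mul_of_nonneg_right key1 hpi
  -- lower bound : (1 - r^N)/μ ≤ h * S + h * (1 - r^N)
  have hlb : (1 - r ^ N) / μ ≤ h * ∑ i ∈ range N, r ^ (i + 1) + h * (1 - r ^ N) := by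
    have hstep : ∀ i ∈ range N, (r ^ i - r ^ (i + 1)) / μ ≤ h * r ^ i := by
      intro i _
      have hpi : (0:ℝ) ≤ r ^ i := le_of_lt (pow_pos hr0 i)
      rw [div_le_iff₀ hμ]
      have : r ^ i - r ^ (i + 1) = (1 - r) * r ^ i := by rw [pow_succ]; ring
      rw [this]
      have : h * r ^ i * μ = u * r ^ i := by rw [hu]; ring
      rw [this]
      exact mul_le_mul_of_nonneg_right key2 hpi
    have hsum : (1 - r ^ N) / μ ≤ h * ∑ i ∈ range N, r ^ i := by
      rw [← htel, Finset.sum_div, mul_sum]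
      exact Finset.sum_le_sum hstep
    have hshift : ∑ i ∈ range N, r ^ i = ∑ i ∈ range N, r ^ (i + 1) + (1 - r ^ N) := by
      have h1 : ∑ i ∈ range N, r ^ i - ∑ i ∈ range N, r ^ (i + 1) = 1 - r ^ N := by
        rw [← Finset.sum_sub_distrib, htel]
      linarith
    rw [hshift, mul_add] at hsum
    exact hsum
  have hrNT : r ^ N = Real.exp (-(T * μ)) := by
    rw [hr, ← Real.exp_nat_mul]
    congr 1
    rw [hu, hh]
    field_simp
  constructor
  · rw [hIcc]
    have : (1 - r ^ N) / μ ≤ μ⁻¹ := by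
      rw [div_le_iff₀ hμ, inv_mul_cancel₀ (ne_of_gt hμ)]
      linarith
    linarith
  · rw [hIcc, hrNT.symm]
    have h1 : h * (1 - r ^ N) ≤ h := by nlinarith
    have h2 : μ⁻¹ - r ^ N / μ = (1 - r ^ N) / μ := by
      field_simp
    linarith

lemma log_six_ge : (5:ℝ)/3 ≤ Real.log 6 := by
  rw [Real.le_log_iff_exp_le (by norm_num)]
  have h5 : Real.exp 5 ≤ 216 := by
    have h1 : Real.exp 1 ≤ 2.7182818286 := le_of_lt Real.exp_one_lt_d9
    have h0 : (0:ℝ) < Real.exp 1 := Real.exp_pos 1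
    calc Real.exp 5 = (Real.exp 1) ^ (5:ℕ) := by
          rw [← Real.exp_nat_mul]; norm_num
      _ ≤ 2.7182818286 ^ (5:ℕ) := by
          apply pow_le_pow_left₀ (le_of_lt h0) h1
      _ ≤ 216 := by norm_num
  have hcube : (Real.exp (5/3 : ℝ)) ^ (3:ℕ) = Real.exp 5 := by
    rw [← Real.exp_nat_mul]; norm_num
  have : (Real.exp (5/3 : ℝ)) ^ (3:ℕ) ≤ 6 ^ (3:ℕ) := by
    rw [hcube]; norm_num; linarith
  exact le_of_pow_le_pow_left₀ (by norm_num) (by norm_num) this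

lemma trunc_total (T eps : ℝ) (K : ℕ) (hT : 0 < T)
    (hK6 : 6 * T ≤ K) (heps_lb : 3 * Real.exp (-(2 * T)) ≤ eps) :
    T * (T ^ K / K.factorial) ≤ eps / 6 := by
  have hKpos : (0:ℝ) < K := lt_of_lt_of_le (by linarith) hK6
  have hKfac : (0:ℝ) < K.factorial := by exact_mod_cast Nat.factorial_pos K
  -- K^K ≤ K! * exp K
  have ha : (K:ℝ) ^ K / K.factorial ≤ Real.exp K := by
    have := Real.sum_le_exp_of_nonneg (x := (K:ℝ)) (le_of_lt hKpos) (K + 1)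
    refine le_trans ?_ this
    exact Finset.single_le_sum (f := fun i => (K:ℝ) ^ i / i.factorial)
      (fun i _ => by positivity) (Finset.self_mem_range_succ K)
  -- T^K/K! ≤ exp (K * (1 - log 6))
  have hb : T ^ K / K.factorial ≤ Real.exp (K * (1 - Real.log 6)) := by
    have h1 : T ^ K ≤ ((K:ℝ) / 6) ^ K :=
      pow_le_pow_left₀ (le_of_lt hT) (by linarith) K
    have h6K : ((6:ℝ)) ^ K = Real.exp (K * Real.log 6) := by
      rw [Real.exp_nat_mul, Real.exp_log (by norm_num)]
    have h2 : ((K:ℝ) / 6) ^ K / K.factorial = (K:ℝ) ^ K / K.factorial / 6 ^ K := by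
      rw [div_pow]; ring
    calc T ^ K / K.factorial ≤ ((K:ℝ) / 6) ^ K / K.factorial := by
          gcongr
      _ = (K:ℝ) ^ K / K.factorial / 6 ^ K := h2
      _ ≤ Real.exp K / 6 ^ K := by
          gcongr
      _ = Real.exp (K * (1 - Real.log 6)) := by
          rw [h6K, ← Real.exp_sub]
          congr 1
          ring
  -- exp (K (1 - log 6)) ≤ exp (-4T)
  have hc : Real.exp ((K:ℝ) * (1 - Real.log 6)) ≤ Real.exp (-(4 * T)) := by
    apply Real.exp_le_exp.2
    have hl := log_six_ge
    nlinarith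
  -- T * exp(-4T) ≤ eps/6
  have hd : T * Real.exp (-(4 * T)) ≤ eps / 6 := by
    have h2T : 2 * T + 1 ≤ Real.exp (2 * T) := by
      have := Real.add_one_le_exp (2 * T); linarith
    have hsplit : Real.exp (-(4 * T)) = Real.exp (-(2 * T)) * (Real.exp (2*T))⁻¹ := by
      rw [← Real.exp_neg, ← Real.exp_add]; ring_nf
    have hhalf : T * Real.exp (-(4 * T)) ≤ Real.exp (-(2 * T)) / 2 := by
      rw [hsplit, div_eq_mul_inv _ (2:ℝ)]
      rw [show T * (Real.exp (-(2 * T)) * (Real.exp (2*T))⁻¹)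
          = Real.exp (-(2 * T)) * (T * (Real.exp (2*T))⁻¹) by ring]
      apply mul_le_mul_of_nonneg_left ?_ (Real.exp_nonneg _)
      rw [← div_eq_mul_inv]
      rw [div_le_iff₀ (Real.exp_pos _)]
      nlinarith [Real.exp_pos (2*T)]
    linarith
  calc T * (T ^ K / K.factorial) ≤ T * Real.exp (-(4 * T)) := by
        apply mul_le_mul_of_nonneg_left (hb.trans hc) (le_of_lt hT)
    _ ≤ eps / 6 := hd

lemma eps_bounds (lam eps T : ℝ) (hlam : 0 < lam) (hlam2 : lam ≤ 2)
    (heps : 0 < eps) (hT : 0 < T)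
    (hTlb : Real.log (6 / (eps * lam)) / lam ≤ T) :
    Real.exp (-(T * lam)) ≤ eps * lam / 6 ∧ 3 * Real.exp (-(2 * T)) ≤ eps := by
  have h1 : Real.log (6 / (eps * lam)) ≤ T * lam := by
    rw [div_le_iff₀ hlam] at hTlb; linarith
  have h2 : 6 / (eps * lam) ≤ Real.exp (T * lam) := by
    rw [← Real.exp_log (show (0:ℝ) < 6 / (eps * lam) by positivity)]
    exact Real.exp_le_exp.2 h1
  have hel : 0 < Real.exp (T * lam) := Real.exp_pos _
  have h3 : 6 ≤ eps * lam * Real.exp (T * lam) := by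
    rw [div_le_iff₀ (by positivity)] at h2; linarith
  have hinv : Real.exp (-(T * lam)) * Real.exp (T * lam) = 1 := by
    rw [← Real.exp_add]; simp
  constructor
  · nlinarith [mul_le_mul_of_nonneg_right h3 (le_of_lt (Real.exp_pos (-(T * lam))))]
  · have hE2 : Real.exp (T * lam) ≤ Real.exp (2 * T) := by
      apply Real.exp_le_exp.2; nlinarith
    have hinv2 : Real.exp (-(2 * T)) * Real.exp (2 * T) = 1 := by
      rw [← Real.exp_add]; simp
    have h4 : 6 ≤ eps * 2 * Real.exp (2 * T) := by
      have hme : lam * Real.exp (T * lam) ≤ 2 * Real.exp (2 * T) :=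
        mul_le_mul hlam2 hE2 (le_of_lt hel) (by norm_num)
      nlinarith [mul_le_mul_of_nonneg_left hme (le_of_lt heps)]
    nlinarith [mul_le_mul_of_nonneg_right h4 (le_of_lt (Real.exp_pos (-(2 * T)))),
      Real.exp_pos (-(2*T)), Real.exp_pos (2*T)]

lemma scalar_main (lam eps T : ℝ) (N K : ℕ) (hlam : 0 < lam) (hlam2 : lam ≤ 2)
    (heps : 0 < eps) (hT : 0 < T) (hN : 0 < N) (hK : 0 < K)
    (hTlb : Real.log (6 / (eps * lam)) / lam ≤ T)
    (hNlb : 6 * T / eps ≤ N) (hK6 : 6 * T ≤ K)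
    (μ : ℝ) (hμl : lam ≤ μ) (hμ2 : μ ≤ 2) :
    |μ⁻¹ - (T / N) * ∑ j ∈ Icc 1 N, ∑ k ∈ range K,
        poissonPMF (j * T / N) k * (1 - μ) ^ k| ≤ eps / 2 := by
  have hμ0 : 0 < μ := lt_of_lt_of_le hlam hμl
  have hNR : (0:ℝ) < N := by exact_mod_cast hN
  obtain ⟨hg0, hg1⟩ := geom_part T μ N hN hT hμ0
  obtain ⟨he1, he2⟩ := eps_bounds lam eps T hlam hlam2 heps hT hTlb
  have hTN : T / N ≤ eps / 6 := by
    rw [div_le_div_iff₀ hNR (by norm_num)]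
    rw [div_le_iff₀ heps] at hNlb
    nlinarith
  -- tail of exponential integral
  have htail : Real.exp (-(T * μ)) / μ ≤ eps / 6 := by
    have h1 : Real.exp (-(T * μ)) ≤ Real.exp (-(T * lam)) := by
      apply Real.exp_le_exp.2; nlinarith
    calc Real.exp (-(T * μ)) / μ ≤ Real.exp (-(T * lam)) / lam := by
          gcongr
      _ ≤ (eps * lam / 6) / lam := by gcongr
      _ = eps / 6 := by field_simp
  -- truncation
  have hper : ∀ j ∈ Icc 1 N,
      |∑ k ∈ range K, poissonPMF (j * T / N) k * (1 - μ) ^ k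
        - Real.exp (-(j * T / N * μ))| ≤ T ^ K / K.factorial := by
    intro j hj
    rw [Finset.mem_Icc] at hj
    have hjN : (j:ℝ) ≤ N := by exact_mod_cast hj.2
    have hs0 : (0:ℝ) ≤ j * T / N := by positivity
    have hsT : (j:ℝ) * T / N ≤ T := by
      rw [div_le_iff₀ hNR]; nlinarith
    have := poisson_partial_bound (j * T / N) μ hs0 (le_of_lt hμ0) hμ2 K
    refine this.trans ?_
    gcongr
  have hKfac : (0:ℝ) < K.factorial := by exact_mod_cast Nat.factorial_pos K
  have htrunc : |(T / N) * ∑ j ∈ Icc 1 N,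
      (∑ k ∈ range K, poissonPMF (j * T / N) k * (1 - μ) ^ k
        - Real.exp (-(j * T / N * μ)))| ≤ eps / 6 := by
    rw [abs_mul, abs_of_nonneg (by positivity : (0:ℝ) ≤ T / N)]
    have h1 : |∑ j ∈ Icc 1 N, (∑ k ∈ range K, poissonPMF (j * T / N) k * (1 - μ) ^ k
        - Real.exp (-(j * T / N * μ)))| ≤ N * (T ^ K / K.factorial) := by
      refine (Finset.abs_sum_le_sum_abs _ _).trans ?_
      have := Finset.sum_le_sum hper
      rw [Finset.sum_const, Nat.card_Icc] at this
      simpa using this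
    calc T / N * |∑ j ∈ Icc 1 N, (∑ k ∈ range K, poissonPMF (j * T / N) k * (1 - μ) ^ k
          - Real.exp (-(j * T / N * μ)))|
        ≤ T / N * (N * (T ^ K / K.factorial)) := by
          apply mul_le_mul_of_nonneg_left h1 (by positivity)
      _ = T * (T ^ K / K.factorial) := by field_simp
      _ ≤ eps / 6 := trunc_total T eps K hT hK6 he2
  -- assemble
  have hsplit : μ⁻¹ - (T / N) * ∑ j ∈ Icc 1 N, ∑ k ∈ range K,
      poissonPMF (j * T / N) k * (1 - μ) ^ k
    = (μ⁻¹ - (T / N) * ∑ j ∈ Icc 1 N, Real.exp (-(j * T / N * μ)))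
      - (T / N) * ∑ j ∈ Icc 1 N,
        (∑ k ∈ range K, poissonPMF (j * T / N) k * (1 - μ) ^ k
          - Real.exp (-(j * T / N * μ))) := by
    rw [Finset.sum_sub_distrib]
    ring
  rw [hsplit]
  have hgeom : |μ⁻¹ - (T / N) * ∑ j ∈ Icc 1 N, Real.exp (-(j * T / N * μ))| ≤
      eps / 6 + eps / 6 := by
    rw [abs_of_nonneg hg0]
    linarith
  calc |_ - _| ≤ |μ⁻¹ - (T / N) * ∑ j ∈ Icc 1 N, Real.exp (-(j * T / N * μ))|
        + |(T / N) * ∑ j ∈ Icc 1 N,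
          (∑ k ∈ range K, poissonPMF (j * T / N) k * (1 - μ) ^ k
            - Real.exp (-(j * T / N * μ)))| := abs_sub _ _
    _ ≤ eps / 6 + eps / 6 + eps / 6 := by linarith
    _ = eps / 2 := by ring

lemma mp_unique {n : ℕ} (L X Y : Matrix (Fin n) (Fin n) ℝ)
    (hX : IsMoorePenrose L X) (hY : IsMoorePenrose L Y) : X = Y := by
  obtain ⟨hX1, hX2, hX3, hX4⟩ := hX
  obtain ⟨hY1, hY2, hY3, hY4⟩ := hY
  have hLX : L * X = L * Y := by
    calc L * X = (L * X)ᵀ := hX3.symm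
      _ = Xᵀ * Lᵀ := Matrix.transpose_mul _ _
      _ = Xᵀ * (L * Y * L)ᵀ := by rw [hY1]
      _ = Xᵀ * Lᵀ * (L * Y)ᵀ := by rw [Matrix.transpose_mul (L*Y) L, ← mul_assoc]
      _ = (L * X)ᵀ * (L * Y)ᵀ := by rw [Matrix.transpose_mul L X]
      _ = L * X * (L * Y) := by rw [hX3, hY3]
      _ = L * X * L * Y := by rw [← mul_assoc]
      _ = L * Y := by rw [hX1]
  have hXL : X * L = Y * L := by
    calc X * L = (X * L)ᵀ := hX4.symm
      _ = Lᵀ * Xᵀ := Matrix.transpose_mul _ _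
      _ = (L * Y * L)ᵀ * Xᵀ := by rw [hY1]
      _ = Lᵀ * (L * Y)ᵀ * Xᵀ := by rw [Matrix.transpose_mul (L*Y) L]
      _ = Lᵀ * Yᵀ * Lᵀ * Xᵀ := by rw [Matrix.transpose_mul L Y, ← mul_assoc]
      _ = (Y * L)ᵀ * (X * L)ᵀ := by
          rw [Matrix.transpose_mul Y L, Matrix.transpose_mul X L]
          exact mul_assoc _ _ _
      _ = Y * L * (X * L) := by rw [hY4, hX4]
      _ = Y * (L * X * L) := by rw [mul_assoc Y L (X*L), ← mul_assoc L X L]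
      _ = Y * L := by rw [hX1]
  calc X = X * L * X := hX2.symm
    _ = Y * L * X := by rw [hXL]
    _ = Y * (L * X) := by rw [mul_assoc]
    _ = Y * (L * Y) := by rw [hLX]
    _ = Y * L * Y := by rw [← mul_assoc]
    _ = Y := hY2

lemma diagonal_sum_fun {n : ℕ} {γ : Type*} (s : Finset γ) (g : γ → Fin n → ℝ) :
    ∑ j ∈ s, Matrix.diagonal (g j) = Matrix.diagonal (∑ j ∈ s, g j) := by
  ext i k
  rw [Matrix.sum_apply]
  by_cases h : i = k
  · subst h; simp [Matrix.diagonal_apply_eq]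
  · simp [Matrix.diagonal_apply_ne _ h]

lemma orth_norm {n : ℕ} (U : Matrix (Fin n) (Fin n) ℝ) (h : Uᵀ * U = 1) (v : Fin n → ℝ) :
    ∑ i, (U.mulVec v i) ^ 2 = ∑ i, v i ^ 2 := by
  have key : (U.mulVec v) ⬝ᵥ (U.mulVec v) = v ⬝ᵥ v := by
    rw [Matrix.dotProduct_mulVec, ← Matrix.mulVec_transpose, Matrix.mulVec_mulVec, h,
      Matrix.one_mulVec]
  simpa [dotProduct, sq] using key

theorem laplacian_solver_formula {n : ℕ} (L Ld : Matrix (Fin n) (Fin n) ℝ)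
    (hL : L.PosSemidef)
    (lam : ℝ) (hlam : 0 < lam) (hlam2 : lam ≤ 2)
    (heig : ∀ i, hL.1.eigenvalues i = 0 ∨
      (lam ≤ hL.1.eigenvalues i ∧ hL.1.eigenvalues i ≤ 2))
    (hLd : IsMoorePenrose L Ld)
    (eps T : ℝ) (N K : ℕ)
    (heps : 0 < eps) (hT : 0 < T) (hN : 0 < N) (hK : 0 < K)
    (hTlb : Real.log (6 / (eps * lam)) / lam ≤ T)
    (hNlb : 6 * T / eps ≤ N)
    (hKlb : max (6 * T) (Real.log (6 * T / eps)) ≤ K)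
    (b : Fin n → ℝ) (hb : ∃ y, L.mulVec y = b) :
    Real.sqrt (∑ i, ((Ld -
        (T / N) • ∑ j ∈ Finset.Icc 1 N, ∑ k ∈ Finset.range K,
          poissonPMF (j * T / N) k • (1 - L) ^ k).mulVec b i) ^ 2) ≤
      eps * Real.sqrt (∑ i, (b i) ^ 2) / 2 := by
  have hH := hL.1
  set d : Fin n → ℝ := hH.eigenvalues with hd
  set U : Matrix (Fin n) (Fin n) ℝ :=
    (Matrix.IsHermitian.eigenvectorUnitary hH : Matrix (Fin n) (Fin n) ℝ) with hUdef
  have hU1 : U * star U = 1 :=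
    (Matrix.mem_unitaryGroup_iff).mp (Matrix.IsHermitian.eigenvectorUnitary hH).2
  have hU2 : star U * U = 1 :=
    (Matrix.mem_unitaryGroup_iff').mp (Matrix.IsHermitian.eigenvectorUnitary hH).2
  have hsU : star U = Uᵀ := by
    rw [Matrix.star_eq_conjTranspose, Matrix.conjTranspose_eq_transpose_of_trivial]
  have hspec : L = U * Matrix.diagonal d * star U := by
    convert hH.spectral_theorem using 2
    rw [Unitary.conjStarAlgAut_apply]; rfl
  -- conjugation lemmas
  have hconj_mul : ∀ A B : Matrix (Fin n) (Fin n) ℝ,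
      (U * A * star U) * (U * B * star U) = U * (A * B) * star U := by
    intro A B
    rw [mul_assoc (U * A) (star U) (U * B * star U), mul_assoc U B (star U),
      ← mul_assoc (star U) U (B * star U), hU2, one_mul,
      ← mul_assoc (U * A) B (star U), mul_assoc U A B]
  have hconj_one : U * (1 : Matrix (Fin n) (Fin n) ℝ) * star U = 1 := by
    rw [mul_one, hU1]
  have hconj_pow : ∀ (A : Matrix (Fin n) (Fin n) ℝ) (k : ℕ),
      (U * A * star U) ^ k = U * A ^ k * star U := by
    intro A k
    induction k with
    | zero => rw [pow_zero, pow_zero, hconj_one]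
    | succ m ih => rw [pow_succ, pow_succ, ih, hconj_mul]
  have hconj_sub : ∀ A B : Matrix (Fin n) (Fin n) ℝ,
      (U * A * star U) - (U * B * star U) = U * (A - B) * star U := by
    intro A B
    rw [mul_sub, sub_mul]
  have hconj_smul : ∀ (c : ℝ) (A : Matrix (Fin n) (Fin n) ℝ),
      c • (U * A * star U) = U * (c • A) * star U := by
    intro c A
    rw [Matrix.mul_smul, Matrix.smul_mul]
  have hconj_transpose : ∀ A : Matrix (Fin n) (Fin n) ℝ,
      (U * A * star U)ᵀ = U * Aᵀ * star U := by
    intro A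
    rw [hsU, Matrix.transpose_mul, Matrix.transpose_mul, Matrix.transpose_transpose,
      mul_assoc]
  -- pseudoinverse identification
  have hP : IsMoorePenrose L (U * Matrix.diagonal (fun i => (d i)⁻¹) * star U) := by
    have hDDD : Matrix.diagonal d * Matrix.diagonal (fun i => (d i)⁻¹) * Matrix.diagonal d
        = Matrix.diagonal d := by
      rw [Matrix.diagonal_mul_diagonal, Matrix.diagonal_mul_diagonal]
      have heq : (fun i => d i * (d i)⁻¹ * d i) = d := by
        funext i
        rcases eq_or_ne (d i) 0 with h | h
        · simp [h]
        · rw [mul_inv_cancel₀ h, one_mul]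
      rw [heq]
    have hDDD' : Matrix.diagonal (fun i => (d i)⁻¹) * Matrix.diagonal d
        * Matrix.diagonal (fun i => (d i)⁻¹) = Matrix.diagonal (fun i => (d i)⁻¹) := by
      rw [Matrix.diagonal_mul_diagonal, Matrix.diagonal_mul_diagonal]
      have heq : (fun i => (d i)⁻¹ * d i * (d i)⁻¹) = fun i => (d i)⁻¹ := by
        funext i
        rcases eq_or_ne (d i) 0 with h | h
        · simp [h]
        · rw [inv_mul_cancel₀ h, one_mul]
      rw [heq]
    refine ⟨?_, ?_, ?_, ?_⟩
    · rw [hspec, hconj_mul, hconj_mul, hDDD]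
    · rw [hspec, hconj_mul, hconj_mul, hDDD']
    · rw [hspec, hconj_mul, hconj_transpose, Matrix.transpose_mul,
        Matrix.diagonal_transpose, Matrix.diagonal_transpose]
      rw [Matrix.diagonal_mul_diagonal, Matrix.diagonal_mul_diagonal]
      have heq : (fun i => (d i)⁻¹ * d i) = fun i => d i * (d i)⁻¹ := by
        funext i; ring
      rw [heq]
    · rw [hspec, hconj_mul, hconj_transpose, Matrix.transpose_mul,
        Matrix.diagonal_transpose, Matrix.diagonal_transpose]
      rw [Matrix.diagonal_mul_diagonal, Matrix.diagonal_mul_diagonal]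
      have heq : (fun i => d i * (d i)⁻¹) = fun i => (d i)⁻¹ * d i := by
        funext i; ring
      rw [heq]
  have hLd_eq : Ld = U * Matrix.diagonal (fun i => (d i)⁻¹) * star U :=
    mp_unique L Ld _ hLd hP
  -- the approximation matrix as a conjugated diagonal
  have h1mL : (1 : Matrix (Fin n) (Fin n) ℝ) - L
      = U * Matrix.diagonal (fun i => 1 - d i) * star U := by
    rw [hspec, ← hconj_one, hconj_sub]
    congr 2
    rw [← Matrix.diagonal_one, Matrix.diagonal_sub]
  have hpow : ∀ k : ℕ, ((1 : Matrix (Fin n) (Fin n) ℝ) - L) ^ k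
      = U * Matrix.diagonal (fun i => (1 - d i) ^ k) * star U := by
    intro k
    rw [h1mL, hconj_pow]
    congr 2
    rw [Matrix.diagonal_pow]
    congr 1
  have hM : (T / (N:ℝ)) • ∑ j ∈ Finset.Icc 1 N, ∑ k ∈ Finset.range K,
        poissonPMF (j * T / N) k • ((1 : Matrix (Fin n) (Fin n) ℝ) - L) ^ k
      = U * Matrix.diagonal (fun i => (T / N) * ∑ j ∈ Finset.Icc 1 N, ∑ k ∈ Finset.range K,
          poissonPMF (j * T / N) k * (1 - d i) ^ k) * star U := by
    have hjk : ∀ j : ℕ, ∑ k ∈ Finset.range K,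
        poissonPMF (j * T / N) k • ((1 : Matrix (Fin n) (Fin n) ℝ) - L) ^ k
        = U * Matrix.diagonal (fun i => ∑ k ∈ Finset.range K,
            poissonPMF (j * T / N) k * (1 - d i) ^ k) * star U := by
      intro j
      have hfun : (fun i => ∑ k ∈ Finset.range K, poissonPMF (j * T / N) k * (1 - d i) ^ k)
          = ∑ k ∈ Finset.range K, (poissonPMF (j * T / N) k • fun i => (1 - d i) ^ k) := by
        funext i
        rw [Finset.sum_apply]
        exact Finset.sum_congr rfl fun k _ => rfl
      rw [hfun, ← diagonal_sum_fun, Finset.mul_sum, Finset.sum_mul]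
      refine Finset.sum_congr rfl fun k _ => ?_
      rw [hpow k, hconj_smul, Matrix.diagonal_smul]
    have hsum : ∑ j ∈ Finset.Icc 1 N, ∑ k ∈ Finset.range K,
        poissonPMF (j * T / N) k • ((1 : Matrix (Fin n) (Fin n) ℝ) - L) ^ k
        = U * Matrix.diagonal (∑ j ∈ Finset.Icc 1 N, fun i => ∑ k ∈ Finset.range K,
            poissonPMF (j * T / N) k * (1 - d i) ^ k) * star U := by
      rw [Finset.sum_congr rfl (fun j _ => hjk j), ← diagonal_sum_fun,
        Finset.mul_sum, Finset.sum_mul]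
    rw [hsum, hconj_smul]
    have hfun2 : (fun i => (T / (N:ℝ)) * ∑ j ∈ Finset.Icc 1 N, ∑ k ∈ Finset.range K,
        poissonPMF (j * T / N) k * (1 - d i) ^ k)
        = (T / (N:ℝ)) • (∑ j ∈ Finset.Icc 1 N, fun i => ∑ k ∈ Finset.range K,
            poissonPMF (j * T / N) k * (1 - d i) ^ k) := by
      funext i
      rw [Pi.smul_apply, Finset.sum_apply, smul_eq_mul]
    rw [hfun2, Matrix.diagonal_smul]
  -- the error matrix
  set g : ℝ → ℝ := fun μ => μ⁻¹ - (T / N) * ∑ j ∈ Finset.Icc 1 N, ∑ k ∈ Finset.range K,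
      poissonPMF (j * T / N) k * (1 - μ) ^ k with hg
  have hE : Ld - (T / (N:ℝ)) • ∑ j ∈ Finset.Icc 1 N, ∑ k ∈ Finset.range K,
        poissonPMF (j * T / N) k • ((1 : Matrix (Fin n) (Fin n) ℝ) - L) ^ k
      = U * Matrix.diagonal (fun i => g (d i)) * star U := by
    rw [hLd_eq, hM, hconj_sub]
    congr 2
    rw [Matrix.diagonal_sub]
  -- vector computations
  obtain ⟨y, hy⟩ := hb
  set c : Fin n → ℝ := (star U).mulVec b with hc
  have hcb : ∑ i, (c i) ^ 2 = ∑ i, (b i) ^ 2 := by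
    apply orth_norm
    rw [hsU, Matrix.transpose_transpose, ← hsU, hU1]
  have hczero : ∀ i, d i = 0 → c i = 0 := by
    intro i hi
    have : c = (Matrix.diagonal d).mulVec ((star U).mulVec y) := by
      rw [hc, ← hy, Matrix.mulVec_mulVec, Matrix.mulVec_mulVec, hspec,
        ← mul_assoc, ← mul_assoc, hU2, one_mul]
    rw [this, Matrix.mulVec_diagonal, hi, zero_mul]
  have hEb : (U * Matrix.diagonal (fun i => g (d i)) * star U).mulVec b
      = U.mulVec (fun i => g (d i) * c i) := by
    rw [← Matrix.mulVec_mulVec, ← Matrix.mulVec_mulVec]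
    have hv : (Matrix.diagonal fun i => g (d i)).mulVec ((star U).mulVec b)
        = fun i => g (d i) * c i := by
      funext i
      rw [Matrix.mulVec_diagonal, hc]
    rw [hv]
  -- scalar bound
  have hgb : ∀ i, (g (d i) * c i) ^ 2 ≤ (eps / 2) ^ 2 * (c i) ^ 2 := by
    intro i
    rcases heig i with h0 | ⟨h1, h2⟩
    · rw [hczero i h0]
      simp
    · have := scalar_main lam eps T N K hlam hlam2 heps hT hN hK hTlb hNlb
        (le_trans (le_max_left _ _) hKlb) (d i) h1 h2
      have h5 : |g (d i)| ≤ eps / 2 := by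
        simp only [hg]
        simpa using this
      have habs := abs_le.1 h5
      have hg2 : g (d i) ^ 2 ≤ (eps / 2) ^ 2 := sq_le_sq' habs.1 habs.2
      calc (g (d i) * c i) ^ 2 = g (d i) ^ 2 * (c i) ^ 2 := by ring
        _ ≤ (eps / 2) ^ 2 * (c i) ^ 2 := mul_le_mul_of_nonneg_right hg2 (sq_nonneg _)
  -- assemble
  rw [hE, hEb]
  have hU_norm : ∑ i, (U.mulVec (fun i => g (d i) * c i) i) ^ 2
      = ∑ i, (g (d i) * c i) ^ 2 := by
    apply orth_norm
    rw [← hsU, hU2]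
  rw [hU_norm]
  have hsum : ∑ i, (g (d i) * c i) ^ 2 ≤ (eps / 2) ^ 2 * ∑ i, (b i) ^ 2 := by
    rw [← hcb, Finset.mul_sum]
    exact Finset.sum_le_sum fun i _ => hgb i
  calc Real.sqrt (∑ i, (g (d i) * c i) ^ 2)
      ≤ Real.sqrt ((eps / 2) ^ 2 * ∑ i, (b i) ^ 2) := Real.sqrt_le_sqrt hsum
    _ = (eps / 2) * Real.sqrt (∑ i, (b i) ^ 2) := by
        rw [Real.sqrt_mul (sq_nonneg _), Real.sqrt_sq (by positivity)]
    _ = eps * Real.sqrt (∑ i, (b i) ^ 2) / 2 := by ring
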